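/- (Slow-stop time change lower bound) Let T ≥ 0 and A : ℝ₊ → ℝ satisfy A(t) ≥ T + 1 - t for all t ∈ [0, T+1]. Define f(t) = (1 + tanh(A(t)))/2 and ψ(t) = ∫₀ᵗ f(u) du. Then f(t) ≥ 1 - (1/2)e^{t-T-1} on [0,T+1] and ψ(T+1) ≥ T + 1 + (1/2)(1 - e^{-1-T}) - 1 ≥ T. -/
import Mathlib


/-- Slow-stop time change: lower bounds on f and ψ(T+1). -/
theorem slowstop_lower_bound (T : ℝ) (hT : 0 ≤ T)
    (A : ℝ → ℝ) (hAc : Continuous A)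
    (hA : ∀ t ∈ Set.Icc (0:ℝ) (T + 1), T + 1 - t ≤ A t) :
    (∀ t ∈ Set.Icc (0:ℝ) (T + 1),
      1 - (1 / 2) * Real.exp (t - T - 1) ≤ (1 + Real.tanh (A t)) / 2) ∧
    (T + 1 + (1 / 2) * (1 - Real.exp (-1 - T)) - 1 ≤
      ∫ u in (0:ℝ)..(T + 1), (1 + Real.tanh (A u)) / 2) ∧
    (T ≤ T + 1 + (1 / 2) * (1 - Real.exp (-1 - T)) - 1) := by
  have key : ∀ x : ℝ, 1 - (1/2) * Real.exp (-x) ≤ (1 + Real.tanh x) / 2 := by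
    intro x
    rw [Real.tanh_eq_sinh_div_cosh, Real.sinh_eq, Real.cosh_eq]
    have ha := Real.exp_pos x
    have hb := Real.exp_pos (-x)
    have hab : Real.exp x * Real.exp (-x) = 1 := by
      rw [← Real.exp_add]; simp
    have hne : Real.exp x + Real.exp (-x) ≠ 0 := by positivity
    have hgoal : (1 + (Real.exp x - Real.exp (-x)) / 2 / ((Real.exp x + Real.exp (-x)) / 2)) / 2
        = Real.exp x / (Real.exp x + Real.exp (-x)) := by
      field_simp; ring
    rw [hgoal, le_div_iff₀ (by positivity)]
    nlinarith [sq_nonneg (Real.exp (-x) - 1)]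
  have part1 : ∀ t ∈ Set.Icc (0:ℝ) (T + 1),
      1 - (1 / 2) * Real.exp (t - T - 1) ≤ (1 + Real.tanh (A t)) / 2 := by
    intro t ht
    have h1 := key (A t)
    have h2 : Real.exp (-(A t)) ≤ Real.exp (t - T - 1) :=
      Real.exp_le_exp.mpr (by linarith [hA t ht])
    linarith
  refine ⟨part1, ?_, ?_⟩
  · have hf_cont : Continuous fun u => (1 + Real.tanh (A u)) / 2 := by
      have htanh : Continuous Real.tanh := by
        have h : Real.tanh = fun x => Real.sinh x / Real.cosh x :=
          funext Real.tanh_eq_sinh_div_cosh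
        rw [h]
        exact Real.continuous_sinh.div Real.continuous_cosh fun x => (Real.cosh_pos (x := x)).ne'
      exact (continuous_const.add (htanh.comp hAc)).div_const 2
    have hg_cont : Continuous fun u : ℝ => 1 - (1/2) * Real.exp (u - T - 1) := by
      fun_prop
    have hmono := intervalIntegral.integral_mono_on (μ := MeasureTheory.volume) (by linarith : (0:ℝ) ≤ T+1)
      (hg_cont.intervalIntegrable 0 (T+1)) (hf_cont.intervalIntegrable 0 (T+1)) part1
    have hrw : ∀ u : ℝ, Real.exp (u - T - 1) = Real.exp u * Real.exp (-T-1) := by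
      intro u; rw [← Real.exp_add]; ring_nf
    have hcalc : (∫ u in (0:ℝ)..(T+1), (1 - (1/2) * Real.exp (u - T - 1)))
        = (T+1) - (1/2) * Real.exp (-T-1) * (Real.exp (T+1) - 1) := by
      simp_rw [hrw]
      rw [intervalIntegral.integral_sub intervalIntegrable_const
        (by apply Continuous.intervalIntegrable; fun_prop)]
      simp [intervalIntegral.integral_const_mul, intervalIntegral.integral_mul_const,
        integral_exp]
      ring
    have h3 : Real.exp (-T-1) * Real.exp (T+1) = 1 := by rw [← Real.exp_add]; ring_nf; simp
    have h4 : Real.exp (-1 - T) = Real.exp (-T-1) := by ring_nf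
    have h5 := Real.exp_pos (-T-1)
    rw [hcalc] at hmono
    nlinarith
  · have h : Real.exp (-1 - T) ≤ 1 := Real.exp_le_one_iff.mpr (by linarith)
    linarith
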